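/- The Equal-Filling algorithm does not achieve α-USW for any α > 1/2: on the instance with n singleton classes {c₁},…,{cₙ} plus one class of n agents, where n red items (liked by all agents) arrive first and then n blue items (blue item bᵢ liked only by cᵢ), Equal-Filling attains social welfare n + n/(n+1) while the optimum is 2n. -/

import Mathlib

open Finset

noncomputable section

variable {A : Type*} [Fintype A] [DecidableEq A] {k : ℕ}

/-- The set of agents that like the item arriving at step `t`. -/
def likersAt (L : List (Finset A)) (t : ℕ) : Finset A := L.getD t ∅

/-- The agents of class `i`. -/
def classAgents (classOf : A → Fin k) (i : Fin k) : Finset A :=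
  Finset.univ.filter fun a => classOf a = i

/-- One step of the Equal-Filling algorithm: given current utilities `u` and the
liker set of the arriving item, the item is split equally among classes with an
unsaturated liking agent (each class receives `min β (demand)` where `β` is largest
with total at most 1), and within each class it is water-filled among the liking
agents, raising the lowest utilities to a common level `γ`. Returns the fraction of
the item given to each agent. -/
def efStep (classOf : A → Fin k) (u : A → ℝ) (likers : Finset A) : A → ℝ :=
  let d : Fin k → ℝ := fun i => ∑ a ∈ likers.filter fun a => classOf a = i, (1 - u a)
  let β : ℝ := sSup {b : ℝ | b ≤ 1 ∧ ∑ i : Fin k, min b (d i) ≤ 1}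
  fun a =>
    if a ∈ likers then
      let i := classOf a
      let γ : ℝ := sSup {g : ℝ | g ≤ 1 ∧
        ∑ a' ∈ likers.filter fun a' => classOf a' = i, max (g - u a') 0 ≤ min β (d i)}
      max (γ - u a) 0
    else 0

/-- The utility (total fraction received) of each agent before step `t` of
Equal-Filling on instance `L`. -/
def efUtil (classOf : A → Fin k) (L : List (Finset A)) : ℕ → A → ℝ
  | 0 => fun _ => 0
  | t + 1 => fun a =>
      efUtil classOf L t a + efStep classOf (efUtil classOf L t) (likersAt L t) a

/-- The fraction of item `t` given to each agent by Equal-Filling. -/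
def efAlloc (classOf : A → Fin k) (L : List (Finset A)) (t : ℕ) : A → ℝ :=
  efStep classOf (efUtil classOf L t) (likersAt L t)


/-- Optimistic fractional valuation `V*` of the class with agents `C` for an item
bundle `y` (for `C = univ`, `y ≡ 1` this is the maximum fractional matching size). -/
def VstarFrac (L : List (Finset A)) (C : Finset A) (y : ℕ → ℝ) : ℝ :=
  sSup {v : ℝ | ∃ x : ℕ → A → ℝ,
    (∀ t a, 0 ≤ x t a) ∧
    (∀ t a, x t a ≠ 0 → a ∈ C ∧ a ∈ likersAt L t ∧ t < L.length) ∧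
    (∀ t, ∑ a ∈ C, x t a ≤ y t) ∧
    (∀ a, ∑ t ∈ Finset.range L.length, x t a ≤ 1) ∧
    v = ∑ t ∈ Finset.range L.length, ∑ a ∈ C, x t a}

/-- The agents of the hard instance for Equal-Filling's welfare: `n` singleton-class
agents `c₁,…,cₙ` (`Sum.inl`) and one big class of `n` agents (`Sum.inr`). -/
abbrev uswAgents (n : ℕ) := Fin n ⊕ Fin n

/-- The class of each agent: `cᵢ` forms its own class `i`; the `Sum.inr` agents all
belong to the last class. -/
def uswClassOf (n : ℕ) : uswAgents n → Fin (n + 1) :=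
  Sum.elim (fun i => i.castSucc) (fun _ => Fin.last n)

/-- The items: first `n` red items liked by everyone, then `n` blue items, blue
item `i` liked only by `cᵢ`. -/
def uswInstance (n : ℕ) : List (Finset (uswAgents n)) :=
  (List.ofFn fun _ : Fin n => (Finset.univ : Finset (uswAgents n))) ++
    (List.ofFn fun i : Fin n => {Sum.inl i})

/-- The social welfare attained by Equal-Filling on the hard instance. -/
def uswEF (n : ℕ) : ℝ :=
  ∑ t ∈ Finset.range (uswInstance n).length, ∑ a : uswAgents n,
    efAlloc (uswClassOf n) (uswInstance n) t a

/-! ### Auxiliary lemmas -/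

lemma sSup_eq_of_Iic {S : Set ℝ} {x : ℝ} (h : S = Set.Iic x) : sSup S = x := by
  rw [h, csSup_Iic]

lemma uswInstance_length (n : ℕ) : (uswInstance n).length = n + n := by
  simp [uswInstance]

lemma likers_red (n t : ℕ) (ht : t < n) :
    likersAt (uswInstance n) t = (univ : Finset (uswAgents n)) := by
  unfold likersAt uswInstance
  rw [List.getD_append _ _ _ _ (by simpa using ht),
    List.getD_eq_getElem _ _ (by simpa using ht)]
  simp

lemma likers_blue (n : ℕ) (j : Fin n) :
    likersAt (uswInstance n) (n + j) = ({Sum.inl j} : Finset (uswAgents n)) := by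
  unfold likersAt uswInstance
  rw [List.getD_append_right _ _ _ _ (by simp),
    List.getD_eq_getElem _ _ (by simp)]
  simp

lemma filter_castSucc (n : ℕ) (j : Fin n) :
    (univ : Finset (uswAgents n)).filter (fun a => uswClassOf n a = j.castSucc)
      = {Sum.inl j} := by
  ext a
  rw [Finset.mem_filter]
  rcases a with i | i <;>
    simp [uswClassOf, Fin.castSucc_inj, (Fin.castSucc_lt_last j).ne']

lemma filter_last (n : ℕ) :
    (univ : Finset (uswAgents n)).filter (fun a => uswClassOf n a = Fin.last n)
      = univ.map ⟨Sum.inr, Sum.inr_injective⟩ := by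
  ext a
  rw [Finset.mem_filter]
  rcases a with i | i <;>
    simp [uswClassOf, (Fin.castSucc_lt_last i).ne]

/-- claimed utility profile after `t` steps -/
def Uu (n t : ℕ) : uswAgents n → ℝ :=
  Sum.elim (fun i => if (i : ℕ) + n < t then 1 else (min t n : ℕ) / ((n : ℝ) + 1))
    (fun _ => (min t n : ℕ) / ((n : ℝ) * ((n : ℝ) + 1)))

lemma efStep_red (n : ℕ) (hn : 1 ≤ n) (t : ℕ) (ht : t < n) :
    efStep (uswClassOf n) (Uu n t) (univ : Finset (uswAgents n))
      = Sum.elim (fun _ => 1 / ((n : ℝ) + 1))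
          (fun _ => 1 / ((n : ℝ) * ((n : ℝ) + 1))) := by
  have hn1 : (1 : ℝ) ≤ (n : ℝ) := by exact_mod_cast hn
  have hnpos : (0 : ℝ) < (n : ℝ) := by linarith
  have hn1pos : (0 : ℝ) < (n : ℝ) + 1 := by linarith
  have htn : (t : ℝ) ≤ (n : ℝ) - 1 := by
    have : (t : ℝ) + 1 ≤ (n : ℝ) := by exact_mod_cast ht
    linarith
  have htpos : (0 : ℝ) ≤ (t : ℝ) := by positivity
  set s : ℝ := (t : ℝ) / ((n : ℝ) + 1) with hs
  set r : ℝ := (t : ℝ) / ((n : ℝ) * ((n : ℝ) + 1)) with hr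
  have hUinl : ∀ i : Fin n, Uu n t (Sum.inl i) = s := by
    intro i
    simp only [Uu, Sum.elim_inl]
    rw [if_neg (by omega), Nat.min_eq_left ht.le]
  have hUinr : ∀ i : Fin n, Uu n t (Sum.inr i) = r := by
    intro i
    simp only [Uu, Sum.elim_inr]
    rw [Nat.min_eq_left ht.le]
  have hsle : s ≤ ((n:ℝ) - 1)/((n:ℝ)+1) := by
    rw [hs, div_le_div_iff₀ hn1pos hn1pos]; nlinarith
  have hs1 : 1/((n:ℝ)+1) < 1 - s := by
    have h : s + 1/((n:ℝ)+1) = ((t:ℝ)+1)/((n:ℝ)+1) := by rw [hs, ← add_div]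
    have h2 : ((t:ℝ)+1)/((n:ℝ)+1) < 1 := by
      rw [div_lt_one hn1pos]; linarith
    linarith
  have hspos : 0 ≤ s := by positivity
  -- the demands
  have hd1 : ∀ j : Fin n,
      (∑ a ∈ (univ : Finset (uswAgents n)).filter
        (fun a => uswClassOf n a = (j.castSucc : Fin (n+1))), (1 - Uu n t a)) = 1 - s := by
    intro j
    rw [filter_castSucc, Finset.sum_singleton, hUinl]
  have hd2 :
      (∑ a ∈ (univ : Finset (uswAgents n)).filter
        (fun a => uswClassOf n a = Fin.last n), (1 - Uu n t a)) = (n : ℝ) - s := by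
    rw [filter_last, Finset.sum_map]
    simp only [Function.Embedding.coeFn_mk, hUinr]
    rw [Finset.sum_const, card_univ, Fintype.card_fin, nsmul_eq_mul]
    rw [hr, hs]
    field_simp
  have hd2big : 1/((n:ℝ)+1) < (n:ℝ) - s :=
    lt_of_lt_of_le hs1 (by linarith)
  unfold efStep
  simp only []
  ext a
  have hβ : sSup {b : ℝ | b ≤ 1 ∧ ∑ i : Fin (n+1),
      min b (∑ a ∈ (univ : Finset (uswAgents n)).filter
        (fun a => uswClassOf n a = i), (1 - Uu n t a)) ≤ 1} = 1/((n:ℝ)+1) := by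
    apply sSup_eq_of_Iic
    ext b
    simp only [Set.mem_setOf_eq, Set.mem_Iic]
    rw [Fin.sum_univ_castSucc]
    simp only [hd1, hd2]
    rw [Finset.sum_const, card_univ, Fintype.card_fin, nsmul_eq_mul]
    constructor
    · rintro ⟨hb1, hb2⟩
      by_contra hb
      push_neg at hb
      have h1 : 1/((n:ℝ)+1) < min b (1 - s) := lt_min hb hs1
      have h2 : 1/((n:ℝ)+1) < min b ((n:ℝ) - s) := lt_min hb hd2big
      have hmul : (n:ℝ) * (1/((n:ℝ)+1)) ≤ (n:ℝ) * min b (1 - s) :=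
        mul_le_mul_of_nonneg_left h1.le hnpos.le
      have : (n:ℝ) * (1/((n:ℝ)+1)) + 1/((n:ℝ)+1) = 1 := by field_simp
      linarith
    · intro hb
      have hb1 : b ≤ 1 := le_trans hb (by rw [div_le_one hn1pos]; linarith)
      refine ⟨hb1, ?_⟩
      have h1 : min b (1 - s) ≤ b := min_le_left _ _
      have h2 : min b ((n:ℝ) - s) ≤ b := min_le_left _ _
      have hmul : (n:ℝ) * min b (1 - s) ≤ (n:ℝ) * b :=
        mul_le_mul_of_nonneg_left h1 hnpos.le
      have : ((n:ℝ) + 1) * b ≤ 1 := by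
        have := (le_div_iff₀ hn1pos).mp hb
        linarith
      linarith
  rw [hβ]
  rcases a with i | i
  · -- singleton agent
    rw [if_pos (mem_univ _)]
    simp only [Sum.elim_inl]
    have hcls : uswClassOf n (Sum.inl i) = i.castSucc := rfl
    rw [hcls, hd1, filter_castSucc]
    have hmin : min (1/((n:ℝ)+1)) (1 - s) = 1/((n:ℝ)+1) := min_eq_left hs1.le
    rw [hmin]
    have hγ : sSup {g : ℝ | g ≤ 1 ∧ ∑ a' ∈ ({Sum.inl i} : Finset (uswAgents n)),
        max (g - Uu n t a') 0 ≤ 1/((n:ℝ)+1)} = s + 1/((n:ℝ)+1) := by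
      apply sSup_eq_of_Iic
      ext g
      simp only [Set.mem_setOf_eq, Set.mem_Iic, Finset.sum_singleton, hUinl]
      constructor
      · rintro ⟨hg1, hg2⟩
        have := le_max_left (g - s) 0
        linarith
      · intro hg
        constructor
        · have : s + 1/((n:ℝ)+1) ≤ 1 := by
            rw [hs, ← add_div, div_le_one hn1pos]; linarith
          linarith
        · exact max_le (by linarith) (by positivity)
    rw [hγ, hUinl]
    rw [add_sub_cancel_left]
    exact max_eq_left (by positivity)
  · -- big-class agent
    rw [if_pos (mem_univ _)]
    simp only [Sum.elim_inr]
    have hcls : uswClassOf n (Sum.inr i) = Fin.last n := rfl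
    rw [hcls, hd2, filter_last]
    have hmin : min (1/((n:ℝ)+1)) ((n:ℝ) - s) = 1/((n:ℝ)+1) := min_eq_left hd2big.le
    rw [hmin]
    have hsum : ∀ g : ℝ, (∑ a' ∈ (univ.map ⟨Sum.inr, Sum.inr_injective⟩ :
        Finset (uswAgents n)), max (g - Uu n t a') 0) = (n:ℝ) * max (g - r) 0 := by
      intro g
      rw [Finset.sum_map]
      simp only [Function.Embedding.coeFn_mk, hUinr]
      rw [Finset.sum_const, card_univ, Fintype.card_fin, nsmul_eq_mul]
    have hγ : sSup {g : ℝ | g ≤ 1 ∧ ∑ a' ∈ (univ.map ⟨Sum.inr, Sum.inr_injective⟩ :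
        Finset (uswAgents n)), max (g - Uu n t a') 0 ≤ 1/((n:ℝ)+1)}
        = r + 1/((n:ℝ)*((n:ℝ)+1)) := by
      apply sSup_eq_of_Iic
      ext g
      simp only [Set.mem_setOf_eq, Set.mem_Iic, hsum]
      have key : (n:ℝ) * (1/((n:ℝ)*((n:ℝ)+1))) = 1/((n:ℝ)+1) := by field_simp
      constructor
      · rintro ⟨hg1, hg2⟩
        have h1 : g - r ≤ max (g - r) 0 := le_max_left _ _
        have h2 : (n:ℝ) * (g - r) ≤ (n:ℝ) * max (g - r) 0 :=
          mul_le_mul_of_nonneg_left h1 hnpos.le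
        nlinarith
      · intro hg
        constructor
        · have hle : r + 1/((n:ℝ)*((n:ℝ)+1)) ≤ 1 := by
            rw [hr, ← add_div, div_le_one (by positivity)]
            nlinarith
          linarith
        · have : max (g - r) 0 ≤ 1/((n:ℝ)*((n:ℝ)+1)) :=
            max_le (by linarith) (by positivity)
          calc (n:ℝ) * max (g - r) 0 ≤ (n:ℝ) * (1/((n:ℝ)*((n:ℝ)+1))) :=
                mul_le_mul_of_nonneg_left this hnpos.le
          _ = 1/((n:ℝ)+1) := key
    rw [hγ, hUinr, add_sub_cancel_left]
    exact max_eq_left (by positivity)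

lemma efStep_blue (n : ℕ) (hn : 1 ≤ n) (j : Fin n) :
    efStep (uswClassOf n) (Uu n (n + j)) ({Sum.inl j} : Finset (uswAgents n))
      = fun a => if a = Sum.inl j then 1 / ((n : ℝ) + 1) else 0 := by
  have hn1 : (1 : ℝ) ≤ (n : ℝ) := by exact_mod_cast hn
  have hn1pos : (0 : ℝ) < (n : ℝ) + 1 := by linarith
  set q : ℝ := (n : ℝ) / ((n : ℝ) + 1) with hq
  have hq1 : 1 - q = 1/((n:ℝ)+1) := by rw [hq]; field_simp; ring
  have hUj : Uu n (n + j) (Sum.inl j) = q := by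
    simp only [Uu, Sum.elim_inl]
    rw [if_neg (by omega), Nat.min_eq_right (by omega)]
  have hd : ∀ i : Fin (n+1),
      (∑ a ∈ ({Sum.inl j} : Finset (uswAgents n)).filter
        (fun a => uswClassOf n a = i), (1 - Uu n (n + j) a))
      = if (j.castSucc : Fin (n+1)) = i then 1/((n:ℝ)+1) else 0 := by
    intro i
    rw [Finset.filter_singleton]
    have hcls : uswClassOf n (Sum.inl j) = j.castSucc := rfl
    by_cases h : (j.castSucc : Fin (n+1)) = i
    · rw [if_pos (by rw [hcls]; exact h), if_pos h, Finset.sum_singleton, hUj, hq1]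
    · rw [if_neg (by rw [hcls]; exact h), if_neg h, Finset.sum_empty]
  unfold efStep
  simp only []
  ext a
  have hβ : sSup {b : ℝ | b ≤ 1 ∧ ∑ i : Fin (n+1),
      min b (∑ a ∈ ({Sum.inl j} : Finset (uswAgents n)).filter
        (fun a => uswClassOf n a = i), (1 - Uu n (n + j) a)) ≤ 1} = 1 := by
    apply sSup_eq_of_Iic
    ext b
    simp only [Set.mem_setOf_eq, Set.mem_Iic]
    constructor
    · exact fun h => h.1
    · intro hb
      refine ⟨hb, ?_⟩
      calc ∑ i : Fin (n+1), min b (∑ a ∈ ({Sum.inl j} : Finset (uswAgents n)).filter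
            (fun a => uswClassOf n a = i), (1 - Uu n (n + j) a))
          ≤ ∑ i : Fin (n+1), (if (j.castSucc : Fin (n+1)) = i then 1/((n:ℝ)+1) else 0) := by
            refine Finset.sum_le_sum fun i _ => ?_
            rw [← hd i]; exact min_le_right _ _
        _ = 1/((n:ℝ)+1) := by rw [Finset.sum_ite_eq]; simp
        _ ≤ 1 := by rw [div_le_one hn1pos]; linarith
  rw [hβ]
  by_cases ha : a = Sum.inl j
  · subst ha
    rw [if_pos (mem_singleton_self _), if_pos rfl]
    have hcls : uswClassOf n (Sum.inl j) = j.castSucc := rfl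
    rw [hcls, hd, if_pos rfl]
    have hmin : min 1 (1/((n:ℝ)+1)) = 1/((n:ℝ)+1) :=
      min_eq_right (by rw [div_le_one hn1pos]; linarith)
    rw [hmin, Finset.filter_singleton, if_pos hcls]
    have hγ : sSup {g : ℝ | g ≤ 1 ∧ ∑ a' ∈ ({Sum.inl j} : Finset (uswAgents n)),
        max (g - Uu n (n + j) a') 0 ≤ 1/((n:ℝ)+1)} = 1 := by
      apply sSup_eq_of_Iic
      ext g
      simp only [Set.mem_setOf_eq, Set.mem_Iic, Finset.sum_singleton, hUj]
      constructor
      · exact fun h => h.1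
      · intro hg
        refine ⟨hg, max_le (by linarith [hq1.symm ▸ (by linarith : g - q ≤ 1 - q)]) (by positivity)⟩
    rw [hγ, hUj, hq1]
    exact max_eq_left (by positivity)
  · rw [if_neg (by simpa using ha), if_neg ha]

lemma Uu_succ_red (n t : ℕ) (ht : t < n) (a : uswAgents n) :
    Uu n (t+1) a = Uu n t a +
      Sum.elim (fun _ => 1 / ((n : ℝ) + 1))
        (fun _ => 1 / ((n : ℝ) * ((n : ℝ) + 1))) a := by
  have hn1pos : (0 : ℝ) < (n : ℝ) + 1 := by positivity
  rcases a with i | i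
  · simp only [Uu, Sum.elim_inl]
    rw [if_neg (by omega), if_neg (by omega),
      Nat.min_eq_left (by omega), Nat.min_eq_left ht.le]
    push_cast
    rw [← add_div]
  · simp only [Uu, Sum.elim_inr]
    rw [Nat.min_eq_left (by omega), Nat.min_eq_left ht.le]
    push_cast
    rw [← add_div]

lemma Uu_succ_blue (n : ℕ) (hn : 1 ≤ n) (j : Fin n) (a : uswAgents n) :
    Uu n (n + j + 1) a = Uu n (n + j) a +
      (if a = Sum.inl j then 1 / ((n : ℝ) + 1) else 0) := by
  have hn1pos : (0 : ℝ) < (n : ℝ) + 1 := by positivity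
  rcases a with i | i
  · simp only [Uu, Sum.elim_inl]
    rcases lt_trichotomy (i : ℕ) (j : ℕ) with h | h | h
    · rw [if_pos (by omega), if_pos (by omega),
        if_neg (by simp [Fin.ext_iff]; omega), add_zero]
    · rw [if_pos (by omega), if_neg (by omega),
        if_pos (by simp [Fin.ext_iff]; omega),
        Nat.min_eq_right (by omega)]
      field_simp
    · rw [if_neg (by omega), if_neg (by omega),
        if_neg (by simp [Fin.ext_iff]; omega),
        Nat.min_eq_right (by omega), Nat.min_eq_right (by omega), add_zero]
  · simp only [Uu, Sum.elim_inr]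
    rw [Nat.min_eq_right (by omega), Nat.min_eq_right (by omega),
      if_neg (by simp), add_zero]

lemma efUtil_eq (n : ℕ) (hn : 1 ≤ n) :
    ∀ s, s ≤ n + n → efUtil (uswClassOf n) (uswInstance n) s = Uu n s := by
  intro s
  induction s with
  | zero =>
    intro _
    funext a
    rcases a with i | i <;> simp [efUtil, Uu]
  | succ s ih =>
    intro hs
    have ihs := ih (by omega)
    funext a
    show efUtil (uswClassOf n) (uswInstance n) s a +
      efStep (uswClassOf n) (efUtil (uswClassOf n) (uswInstance n) s)
        (likersAt (uswInstance n) s) a = Uu n (s+1) a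
    rw [ihs]
    rcases lt_or_ge s n with h | h
    · rw [likers_red n s h, efStep_red n hn s h, Uu_succ_red n s h]
    · have hj : s - n < n := by omega
      have hsn : s = n + (⟨s - n, hj⟩ : Fin n) := by simp; omega
      rw [hsn, likers_blue n ⟨s - n, hj⟩, efStep_blue n hn ⟨s - n, hj⟩,
        Uu_succ_blue n hn ⟨s - n, hj⟩]

lemma uswEF_eq (n : ℕ) (hn : 1 ≤ n) :
    uswEF n = (n : ℝ) + (n : ℝ) / ((n : ℝ) + 1) := by
  have hn1 : (1 : ℝ) ≤ (n : ℝ) := by exact_mod_cast hn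
  have hnpos : (0 : ℝ) < (n : ℝ) := by linarith
  have key : ∀ t, ∑ a : uswAgents n, efAlloc (uswClassOf n) (uswInstance n) t a
      = (∑ a : uswAgents n, efUtil (uswClassOf n) (uswInstance n) (t+1) a)
        - ∑ a : uswAgents n, efUtil (uswClassOf n) (uswInstance n) t a := by
    intro t
    rw [← Finset.sum_sub_distrib]
    refine Finset.sum_congr rfl fun a _ => ?_
    show efStep (uswClassOf n) (efUtil (uswClassOf n) (uswInstance n) t)
      (likersAt (uswInstance n) t) a = _
    show _ = (efUtil (uswClassOf n) (uswInstance n) t a +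
      efStep (uswClassOf n) (efUtil (uswClassOf n) (uswInstance n) t)
        (likersAt (uswInstance n) t) a) - efUtil (uswClassOf n) (uswInstance n) t a
    ring
  unfold uswEF
  rw [uswInstance_length]
  simp_rw [key]
  rw [Finset.sum_range_sub (fun t => ∑ a : uswAgents n,
    efUtil (uswClassOf n) (uswInstance n) t a)]
  rw [efUtil_eq n hn (n+n) le_rfl]
  have h0 : efUtil (uswClassOf n) (uswInstance n) 0 = fun _ => (0:ℝ) := rfl
  rw [h0]
  simp only [Fintype.sum_sum_type]
  have h1 : ∀ i : Fin n, Uu n (n+n) (Sum.inl i) = 1 := by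
    intro i
    simp only [Uu, Sum.elim_inl]
    rw [if_pos (by omega)]
  have h2 : ∀ i : Fin n, Uu n (n+n) (Sum.inr i) = 1/((n:ℝ)+1) := by
    intro i
    simp only [Uu, Sum.elim_inr]
    rw [Nat.min_eq_right (by omega)]
    field_simp
  simp only [h1, h2, Finset.sum_const, card_univ, Fintype.card_fin, nsmul_eq_mul,
    mul_one, Finset.sum_const_zero]
  field_simp
  ring

/-- the optimal fractional assignment -/
def xopt (n : ℕ) : ℕ → uswAgents n → ℝ := fun t a =>
  if h : t < n then (if a = Sum.inr ⟨t, h⟩ then 1 else 0)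
  else if h2 : t < n + n then
    (if a = Sum.inl ⟨t - n, by omega⟩ then 1 else 0)
  else 0

lemma xopt_inr (n : ℕ) (j : Fin n) (t : ℕ) :
    xopt n t (Sum.inr j) = if t = (j : ℕ) then 1 else 0 := by
  unfold xopt
  split_ifs with h h1 h2 h3 h4 <;>
    simp_all [Fin.ext_iff] <;> omega

lemma xopt_inl (n : ℕ) (i : Fin n) (t : ℕ) :
    xopt n t (Sum.inl i) = if t = n + (i : ℕ) then 1 else 0 := by
  unfold xopt
  split_ifs with h h1 h2 h3 h4 <;>
    simp_all [Fin.ext_iff] <;> omega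

lemma Vstar_eq (n : ℕ) (hn : 1 ≤ n) :
    VstarFrac (uswInstance n) (Finset.univ : Finset (uswAgents n)) (fun _ => 1)
      = 2 * (n : ℝ) := by
  unfold VstarFrac
  apply IsGreatest.csSup_eq
  constructor
  · -- membership
    refine ⟨xopt n, ?_, ?_, ?_, ?_, ?_⟩
    · intro t a
      unfold xopt
      split_ifs <;> norm_num
    · intro t a hne
      refine ⟨mem_univ _, ?_, ?_⟩
      · by_cases h : t < n
        · rw [likers_red n t h]; exact mem_univ _
        · by_cases h2 : t < n + n
          · have hj : t - n < n := by omega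
            have ht : t = n + ((⟨t - n, hj⟩ : Fin n) : ℕ) := by simp; omega
            rw [ht, likers_blue]
            have ha : a = Sum.inl (⟨t - n, hj⟩ : Fin n) := by
              by_contra hcon
              apply hne
              unfold xopt
              rw [dif_neg h, dif_pos h2, if_neg hcon]
            rw [ha]; exact mem_singleton_self _
          · exfalso; apply hne; unfold xopt; rw [dif_neg h, dif_neg h2]
      · rw [uswInstance_length]
        by_cases h2 : t < n + n
        · exact h2
        · exfalso; apply hne; unfold xopt
          rw [dif_neg (by omega), dif_neg h2]
    · intro t
      unfold xopt
      split_ifs with h h2 <;> simp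
    · intro a
      rcases a with i | i
      · simp only [xopt_inl]
        rw [uswInstance_length, Finset.sum_ite_eq' (Finset.range (n+n)) (n + (i:ℕ)) fun _ => (1:ℝ)]
        split_ifs <;> norm_num
      · simp only [xopt_inr]
        rw [uswInstance_length, Finset.sum_ite_eq' (Finset.range (n+n)) ((i:ℕ)) fun _ => (1:ℝ)]
        split_ifs <;> norm_num
    · rw [uswInstance_length]
      have hcol : ∀ t ∈ Finset.range (n+n), ∑ a : uswAgents n, xopt n t a = 1 := by
        intro t ht
        rw [mem_range] at ht
        unfold xopt
        by_cases h : t < n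
        · simp_rw [dif_pos h]; simp
        · simp_rw [dif_neg h, dif_pos ht]; simp
      rw [Finset.sum_congr rfl hcol, Finset.sum_const, card_range, nsmul_eq_mul, mul_one]
      push_cast; ring
  · -- upper bound
    rintro v ⟨x, hpos, hsupp, hcol, hrow, rfl⟩
    calc ∑ t ∈ Finset.range (uswInstance n).length, ∑ a : uswAgents n, x t a
        ≤ ∑ t ∈ Finset.range (uswInstance n).length, (1:ℝ) :=
          Finset.sum_le_sum fun t _ => hcol t
      _ = 2 * (n:ℝ) := by
          rw [Finset.sum_const, card_range, uswInstance_length, nsmul_eq_mul, mul_one]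
          push_cast; ring


/-- Equal-Filling does not achieve `α`-USW for any `α > 1/2`: on the instance with
`n` singleton classes plus one class of `n` agents, `n` red items followed by `n`
blue items, Equal-Filling attains welfare exactly `n + n/(n+1)` while the optimum is
`2n`; hence for every `α > 1/2` some instance witnesses `uswEF < α · 2n`. -/
theorem stmt_19 :
    (∀ n : ℕ, 1 ≤ n →
      uswEF n = (n : ℝ) + (n : ℝ) / ((n : ℝ) + 1) ∧
      VstarFrac (uswInstance n) (Finset.univ : Finset (uswAgents n)) (fun _ => 1)
        = 2 * (n : ℝ)) ∧
    (∀ α : ℝ, α > 1 / 2 → ∃ n : ℕ, 1 ≤ n ∧ uswEF n < α * (2 * (n : ℝ))) := by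
  constructor
  · exact fun n hn => ⟨uswEF_eq n hn, Vstar_eq n hn⟩
  · intro α hα
    have h2a : 0 < 2 * α - 1 := by linarith
    obtain ⟨m, hm⟩ := exists_nat_gt (1 / (2 * α - 1))
    refine ⟨max m 1, le_max_right _ _, ?_⟩
    set n : ℕ := max m 1 with hn
    have hn1 : 1 ≤ n := le_max_right _ _
    have hnm : (m : ℝ) ≤ (n : ℝ) := by exact_mod_cast le_max_left m 1
    have hnR : (1:ℝ) ≤ (n:ℝ) := by exact_mod_cast hn1
    have hgt : 1 / (2 * α - 1) < (n : ℝ) + 1 := by linarith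
    have hn1pos : (0:ℝ) < (n:ℝ) + 1 := by linarith
    have hfrac : 1 / ((n:ℝ) + 1) < 2 * α - 1 := by
      rw [div_lt_iff₀ hn1pos]
      have := (div_lt_iff₀ h2a).mp hgt
      nlinarith
    rw [uswEF_eq n hn1]
    have hdiv : (n:ℝ) / ((n:ℝ)+1) = (n:ℝ) * (1/((n:ℝ)+1)) := by ring
    rw [hdiv]
    nlinarith [mul_lt_mul_of_pos_left hfrac (by linarith : (0:ℝ) < (n:ℝ))]

end
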